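/- Let λ1 ≥ λ2 ≥ λ3 > 0 with σ1 = λ1+λ2+λ3, f = λ1λ2λ3/σ1, and assume λ2 ≥ √(f/3). Define F^{22} = f(1/λ2 − 1/σ1) and F^{33} = f(1/λ3 − 1/σ1). Then 2F^{33}/λ1² − f²/(2σ1⁴F^{22}) ≥ 0. -/

import Mathlib

theorem caseA_u331_coefficient (l1 l2 l3 σ1 f F22 F33 : ℝ)
    (h12 : l1 ≥ l2) (h23 : l2 ≥ l3) (h3 : l3 > 0)
    (hσ1 : σ1 = l1 + l2 + l3) (hf : f = l1 * l2 * l3 / σ1)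
    (hl2 : l2 ≥ Real.sqrt (f / 3))
    (hF22 : F22 = f * (1 / l2 - 1 / σ1)) (hF33 : F33 = f * (1 / l3 - 1 / σ1)) :
    2 * F33 / l1 ^ 2 - f ^ 2 / (2 * σ1 ^ 4 * F22) ≥ 0 := by
  have hl2p : (0:ℝ) < l2 := lt_of_lt_of_le h3 h23
  have hl1p : (0:ℝ) < l1 := lt_of_lt_of_le hl2p h12
  have hσp : (0:ℝ) < σ1 := by rw [hσ1]; linarith
  have hfp : 0 < f := by rw [hf]; positivity
  have hF22p : 0 < F22 := by
    rw [hF22]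
    apply mul_pos hfp
    rw [sub_pos]
    apply one_div_lt_one_div_of_lt hl2p
    rw [hσ1]; linarith
  have hF33p : 0 < F33 := by
    rw [hF33]
    apply mul_pos hfp
    rw [sub_pos]
    apply one_div_lt_one_div_of_lt h3
    rw [hσ1]; linarith
  rw [ge_iff_le, sub_nonneg, div_le_div_iff₀ (by positivity) (by positivity)]
  rw [hF22, hF33, hf, hσ1]
  have h1 : (0:ℝ) < l1 + l2 + l3 := by linarith
  field_simp
  have key : l1^2*l2*l3 ≤ 4*((l1+l2)*((l1+l3)*(l1+l2+l3)^2)) := by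
    nlinarith [mul_pos hl1p hl2p, mul_pos hl2p h3, mul_pos hl1p h3, sq_nonneg (l1+l2+l3),
      mul_le_mul_of_nonneg_left (mul_le_mul_of_nonneg_left h12.le h3.le) (mul_pos hl1p hl2p).le]
  have key2 := mul_le_mul_of_nonneg_left key (show (0:ℝ) ≤ (l1*l2*l3)^2*(l1+l2+l3)^4 by positivity)
  nlinarith [key2]
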